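/- The dominating number of the almost-refinement system of the Cohen algebra equals cof(ℳ), the cofinality of the meagre ideal on Cantor space, and the bounding number of its σ-version equals add(ℳ). -/

import Mathlib

/-- A relational system `⟨A₋, A, A₊⟩`. -/
structure RelSys : Type 1 where
  Dom : Type
  Cod : Type
  Rel : Dom → Cod → Prop

/-- The dominating number `𝔡(A)` of a relational system. -/
noncomputable def dNum (S : RelSys) : Cardinal :=
  sInf { c | ∃ Y : Set S.Cod, Cardinal.mk Y = c ∧ ∀ x : S.Dom, ∃ y ∈ Y, S.Rel x y }

/-- The bounding number `𝔟(A)` of a relational system. -/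
noncomputable def bNum (S : RelSys) : Cardinal :=
  sInf { c | ∃ X : Set S.Dom, Cardinal.mk X = c ∧ ∀ y : S.Cod, ∃ x ∈ X, ¬ S.Rel x y }

/-- A generalized Galois–Tukey connection from `S` to `T` (`S ≤_T T`). -/
def GT (S T : RelSys) : Prop :=
  ∃ (φm : S.Dom → T.Dom) (φp : T.Cod → S.Cod),
    ∀ a b, T.Rel (φm a) b → S.Rel a (φp b)

/-- Galois–Tukey equivalence. -/
def GTequiv (S T : RelSys) : Prop := GT S T ∧ GT T S

/-- The σ-version `A^σ` of a relational system. -/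
def sigmaSys (S : RelSys) : RelSys :=
  ⟨S.Dom, ℕ → S.Cod, fun a f => ∃ n, S.Rel a (f n)⟩

/-- Sequential composition `A;B` of relational systems. -/
def seqComp (S T : RelSys) : RelSys :=
  ⟨S.Dom × (S.Cod → T.Dom), S.Cod × T.Cod,
   fun p q => S.Rel p.1 q.1 ∧ T.Rel (p.2 q.1) q.2⟩

/-- An antichain in a Boolean algebra: pairwise disjoint nonzero elements. -/
def BAAntichain {α : Type} [BooleanAlgebra α] (A : Set α) : Prop :=
  (∀ a ∈ A, a ≠ ⊥) ∧ ∀ a ∈ A, ∀ b ∈ A, a ≠ b → a ⊓ b = ⊥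

/-- A maximal antichain in a Boolean algebra. -/
def MaxAC {α : Type} [BooleanAlgebra α] (A : Set α) : Prop :=
  BAAntichain A ∧ ∀ b : α, b ≠ ⊥ → ∃ a ∈ A, a ⊓ b ≠ ⊥

/-- The countable chain condition. -/
def CCC (α : Type) [BooleanAlgebra α] : Prop :=
  ∀ A : Set α, BAAntichain A → A.Countable

/-- `C` refines `A` (written `A ≤ C`): every element of `C` is below some element of `A`. -/
def Refines {α : Type} [BooleanAlgebra α] (A C : Set α) : Prop :=
  ∀ c ∈ C, ∃ a ∈ A, c ≤ a

/-- `C` almost refines `A` (written `A ≤* C`). -/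
def AlmostRefines {α : Type} [BooleanAlgebra α] (A C : Set α) : Prop :=
  ∃ F : Finset α, ↑F ⊆ A ∧ Refines ((A \ ↑F) ∪ {F.sup id}) C

/-- The set of maximal antichains of `α`. -/
def PartT (α : Type) [BooleanAlgebra α] : Type := {A : Set α // MaxAC A}

/-- The refinement relational system `Part(α)`. -/
def PartSys (α : Type) [BooleanAlgebra α] : RelSys :=
  ⟨PartT α, PartT α, fun A C => Refines A.1 C.1⟩

/-- The almost-refinement relational system `Part*(α)`. -/
def PartStar (α : Type) [BooleanAlgebra α] : RelSys :=
  ⟨PartT α, PartT α, fun A C => AlmostRefines A.1 C.1⟩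

/-- The eventual domination relational system `(ωω, ≤*, ωω)`. -/
def domSys : RelSys :=
  ⟨ℕ → ℕ, ℕ → ℕ, fun f g => ∀ᶠ n in Filter.atTop, f n ≤ g n⟩

/-- Quotients of Boolean rings are Boolean rings. -/
instance quotBooleanRing (R : Type) [BooleanRing R] (I : Ideal R) :
    BooleanRing (R ⧸ I) :=
  { (inferInstance : CommRing (R ⧸ I)) with
    isIdempotentElem := fun a => by
      obtain ⟨x, rfl⟩ := Ideal.Quotient.mk_surjective a
      unfold IsIdempotentElem
      rw [← map_mul, BooleanRing.mul_self] }

/-- The quotient of a Boolean algebra by an ideal (presented as a ring ideal of the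
associated Boolean ring), again viewed as a Boolean algebra. -/
def quotAlg (α : Type) [BooleanAlgebra α] (I : Ideal (AsBoolRing α)) : Type :=
  AsBoolAlg (AsBoolRing α ⧸ I)

noncomputable instance quotAlgBA (α : Type) [BooleanAlgebra α] (I : Ideal (AsBoolRing α)) :
    BooleanAlgebra (quotAlg α I) :=
  inferInstanceAs (BooleanAlgebra (AsBoolAlg (AsBoolRing α ⧸ I)))

/-- The quotient map from a Boolean algebra to its quotient algebra. -/
def quotCls {α : Type} [BooleanAlgebra α] (I : Ideal (AsBoolRing α)) (a : α) : quotAlg α I :=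
  toBoolAlg (Ideal.Quotient.mk I (toBoolRing a))

/-- The ideal of finite subsets of `ω`, as a ring ideal of `P(ω)`. -/
def finIdeal : Ideal (AsBoolRing (Set ℕ)) where
  carrier := {x | (ofBoolRing x : Set ℕ).Finite}
  zero_mem' := by simp [ofBoolRing_zero, Set.bot_eq_empty]
  add_mem' := by
    intro a b ha hb
    simpa [ofBoolRing_add] using ((ha.union hb).subset (Set.symmDiff_subset_union))
  smul_mem' := by
    intro c x hx
    simpa [smul_eq_mul, ofBoolRing_mul] using hx.subset (by simp [Set.inf_eq_inter])

/-- `P(ω)/fin`. -/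
def PomegaFin : Type := quotAlg (Set ℕ) finIdeal

noncomputable instance : BooleanAlgebra PomegaFin := quotAlgBA _ _

/-- The ideal `Fin` of the product algebra `ωB`: functions with finite support. -/
def finSuppIdeal (B : Type) [BooleanAlgebra B] : Ideal (AsBoolRing (ℕ → B)) where
  carrier := {x | {n | (ofBoolRing x : ℕ → B) n ≠ ⊥}.Finite}
  zero_mem' := by simp [ofBoolRing_zero]
  add_mem' := by
    intro a b ha hb
    refine ((ha.union hb).subset ?_)
    intro n hn
    simp only [ofBoolRing_add, Pi.symmDiff_apply, Set.mem_setOf_eq] at hn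
    by_contra h
    simp only [Set.mem_union, Set.mem_setOf_eq, not_or, ne_eq, not_not] at h
    simp [h.1, h.2] at hn
  smul_mem' := by
    intro c x hx
    refine hx.subset ?_
    intro n hn
    simp only [smul_eq_mul, ofBoolRing_mul, Pi.inf_apply, Set.mem_setOf_eq] at hn
    simp only [Set.mem_setOf_eq]
    intro h
    simp [h] at hn

/-- The reduced power `ωB/Fin` of a Boolean algebra `B`. -/
def redPow (B : Type) [BooleanAlgebra B] : Type := quotAlg (ℕ → B) (finSuppIdeal B)

noncomputable instance (B : Type) [BooleanAlgebra B] : BooleanAlgebra (redPow B) := quotAlgBA _ _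

abbrev Cantor : Type := ℕ → Bool

/-- The basic clopen set `N_s` determined by a finite binary sequence `s`. -/
def cyl (s : List Bool) : Set Cantor := {f | ∀ i, i < s.length → f i = s.getD i false}

lemma cyl_measurable (s : List Bool) : MeasurableSet (cyl s) := by
  have h : cyl s = ⋂ i ∈ Finset.range s.length, (fun f : Cantor => f i) ⁻¹' {s.getD i false} := by
    ext f
    simp [cyl]
  rw [h]
  exact Finset.measurableSet_biInter _ fun i _ => (measurable_pi_apply i) (by trivial)

/-- The σ-ideal of meagre subsets of Cantor space. -/
def MeagreSets : Set (Set Cantor) := {s | IsMeagre s}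

/-- `cof(ℳ)`: the cofinality of the meagre ideal of Cantor space. -/
noncomputable def cofM : Cardinal :=
  sInf { c | ∃ F : Set (Set Cantor), (∀ s ∈ F, IsMeagre s) ∧
    (∀ s : Set Cantor, IsMeagre s → ∃ t ∈ F, s ⊆ t) ∧ Cardinal.mk F = c }

/-- `add(ℳ)`: the additivity of the meagre ideal of Cantor space. -/
noncomputable def addM : Cardinal :=
  sInf { c | ∃ F : Set (Set Cantor), (∀ s ∈ F, IsMeagre s) ∧
    ¬ IsMeagre (⋃₀ F) ∧ Cardinal.mk F = c }



/-- The Borel subsets of Cantor space, as a Boolean algebra of sets. -/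
abbrev BorelSets : Type := {s : Set Cantor // MeasurableSet s}

lemma IsMeagre.union' {X : Type} [TopologicalSpace X] {s t : Set X}
    (hs : IsMeagre s) (ht : IsMeagre t) : IsMeagre (s ∪ t) := by
  rw [IsMeagre, Set.compl_union]; exact Filter.inter_mem hs ht

/-- The ideal of meagre Borel sets, as a ring ideal of the Boolean ring of Borel sets. -/
noncomputable def meagreIdeal : Ideal (AsBoolRing BorelSets) where
  carrier := {x | IsMeagre ((ofBoolRing x : BorelSets) : Set Cantor)}
  zero_mem' := by
    show IsMeagre ((ofBoolRing (0 : AsBoolRing BorelSets) : BorelSets) : Set Cantor)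
    rw [ofBoolRing_zero]
    simpa using IsMeagre.empty
  add_mem' := by
    intro a b ha hb
    show IsMeagre ((ofBoolRing (a + b) : BorelSets) : Set Cantor)
    rw [ofBoolRing_add]
    refine (ha.union' hb).mono ?_
    have h : ((symmDiff (ofBoolRing a) (ofBoolRing b) : BorelSets) : Set Cantor)
        = symmDiff ((ofBoolRing a : BorelSets) : Set Cantor) ((ofBoolRing b : BorelSets) : Set Cantor) := rfl
    rw [h]
    exact symmDiff_le_sup
  smul_mem' := by
    intro c x hx
    show IsMeagre ((ofBoolRing (c • x) : BorelSets) : Set Cantor)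
    rw [smul_eq_mul, ofBoolRing_mul]
    refine hx.mono ?_
    have : ((ofBoolRing c ⊓ ofBoolRing x : BorelSets) : Set Cantor)
        = ((ofBoolRing c : BorelSets) : Set Cantor) ∩ (ofBoolRing x : BorelSets) := rfl
    rw [this]
    exact Set.inter_subset_right

/-- The Cohen algebra `ℂ_ω = Borel(2^ω)/meagre`. -/
def CohenAlg : Type := quotAlg BorelSets meagreIdeal

noncomputable instance : BooleanAlgebra CohenAlg := quotAlgBA _ _

/-- The equivalence class `[X]` of a Borel set in the Cohen algebra. -/
noncomputable def cohenCls (X : BorelSets) : CohenAlg := quotCls meagreIdeal X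

/-- The class `[N_s]` of a basic clopen set in the Cohen algebra. -/
noncomputable def cylC (s : List Bool) : CohenAlg := cohenCls ⟨cyl s, cyl_measurable s⟩

namespace S14
open Topology Filter Set

noncomputable section

/-! ### Basic topology of Cantor space -/

/-- The cylinder determined by the first `n` values of `g`. -/
def Cl (g : Cantor) (n : ℕ) : Set Cantor := {z | ∀ i, i < n → z i = g i}

lemma self_mem_Cl (g : Cantor) (n : ℕ) : g ∈ Cl g n := fun _ _ => rfl

lemma Cl_anti (g : Cantor) {n n' : ℕ} (h : n ≤ n') : Cl g n' ⊆ Cl g n :=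
  fun _ hz i hi => hz i (lt_of_lt_of_le hi h)

lemma Cl_eq_of_agree {g g' : Cantor} {n : ℕ} (h : ∀ i, i < n → g i = g' i) :
    Cl g n = Cl g' n := by
  ext z; constructor <;> intro hz i hi
  · rw [hz i hi, h i hi]
  · rw [hz i hi, h i hi]

lemma mem_Cl_of_agree {z g : Cantor} {n : ℕ} (h : ∀ i, i < n → z i = g i) : z ∈ Cl g n := h

lemma Cl_subset_Cl {g g' : Cantor} {n n' : ℕ} (h : n ≤ n') (hg : ∀ i, i < n → g' i = g i) :
    Cl g' n' ⊆ Cl g n := by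
  intro z hz i hi
  rw [hz i (lt_of_lt_of_le hi h), hg i hi]

lemma isOpen_Cl (g : Cantor) (n : ℕ) : IsOpen (Cl g n) := by
  have : Cl g n = ⋂ i ∈ Finset.range n, (fun z : Cantor => z i) ⁻¹' {g i} := by
    ext z; simp [Cl]
  rw [this]
  exact isOpen_biInter_finset fun i _ =>
    (continuous_apply i).isOpen_preimage _ (isOpen_discrete _)

lemma isClosed_Cl (g : Cantor) (n : ℕ) : IsClosed (Cl g n) := by
  have : Cl g n = ⋂ i ∈ Finset.range n, (fun z : Cantor => z i) ⁻¹' {g i} := by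
    ext z; simp [Cl]
  rw [this]
  exact isClosed_biInter fun i _ =>
    (IsClosed.preimage (continuous_apply i) (isClosed_discrete _))

lemma measurableSet_Cl (g : Cantor) (n : ℕ) : MeasurableSet (Cl g n) :=
  (isOpen_Cl g n).measurableSet

/-- Cylinders form a neighborhood basis. -/
lemma exists_Cl_subset {U : Set Cantor} (hU : IsOpen U) {z : Cantor} (hz : z ∈ U) :
    ∃ n, Cl z n ⊆ U := by
  rw [isOpen_pi_iff] at hU
  obtain ⟨I, u, hu, hsub⟩ := hU z hz
  classical
  refine ⟨(I.sup id) + 1, fun w hw => hsub ?_⟩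
  intro i hi
  have : w i = z i := hw i (Nat.lt_succ_of_le (Finset.le_sup (f := id) hi))
  rw [this]
  exact (hu i hi).2

lemma not_isMeagre_of_isOpen {U : Set Cantor} (hU : IsOpen U) (hne : U.Nonempty) :
    ¬ IsMeagre U := by
  intro h
  have hd : Dense Uᶜ := dense_of_mem_residual h
  obtain ⟨x, hx⟩ := hd.inter_open_nonempty U hU hne
  exact hx.2 hx.1

lemma eq_empty_of_isOpen_isMeagre {U : Set Cantor} (hU : IsOpen U) (h : IsMeagre U) :
    U = ∅ := by
  by_contra hne
  exact not_isMeagre_of_isOpen hU (nonempty_iff_ne_empty.mpr hne) h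

lemma not_isMeagre_Cl (g : Cantor) (n : ℕ) : ¬ IsMeagre (Cl g n) :=
  not_isMeagre_of_isOpen (isOpen_Cl g n) ⟨g, self_mem_Cl g n⟩

lemma not_isMeagre_univ : ¬ IsMeagre (univ : Set Cantor) :=
  not_isMeagre_of_isOpen isOpen_univ ⟨fun _ => false, trivial⟩

lemma not_isMeagre_diff {s t : Set Cantor} (hs : ¬ IsMeagre s) (ht : IsMeagre t) :
    ¬ IsMeagre (s \ t) := by
  intro h
  exact hs ((h.union' ht).mono (by intro z hz; by_cases hzt : z ∈ t
                                   · exact Or.inr hzt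
                                   · exact Or.inl ⟨hz, hzt⟩))

lemma isMeagre_singleton (z : Cantor) : IsMeagre ({z} : Set Cantor) := by
  rw [IsMeagre]
  apply residual_of_dense_open
  · exact isOpen_compl_singleton
  · rw [dense_iff_inter_open]
    intro U hU ⟨w, hw⟩
    obtain ⟨n, hn⟩ := exists_Cl_subset hU hw
    set w' : Cantor := fun i => if i < n then w i else !(z i) with hw'
    have hw'mem : w' ∈ Cl w n := fun i hi => by simp [hw', hi]
    refine ⟨w', hn hw'mem, ?_⟩
    simp only [mem_compl_iff, mem_singleton_iff]
    intro hzz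
    have : w' n = !(z n) := by simp [hw']
    rw [hzz] at this
    simp at this

end
end S14
namespace S14
open Topology Filter Set

noncomputable section

/-! ### The quotient algebra layer -/

theorem quotCls_le_iff {α : Type} [BooleanAlgebra α] (I : Ideal (AsBoolRing α)) (a b : α) :
    quotCls I a ≤ quotCls I b ↔ toBoolRing (a \ b) ∈ I := by
  show (toBoolAlg (Ideal.Quotient.mk I (toBoolRing a)) : AsBoolAlg (AsBoolRing α ⧸ I))
      ≤ toBoolAlg (Ideal.Quotient.mk I (toBoolRing b)) ↔ _
  rw [← inf_eq_left, ← toBoolAlg_mul, toBoolAlg.apply_eq_iff_eq, ← map_mul,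
    Ideal.Quotient.mk_eq_mk_iff_sub_mem, sub_eq_add_neg, BooleanRing.neg_eq]
  have : toBoolRing a * toBoolRing b + toBoolRing a = toBoolRing (a \ b) := by
    rw [← toBoolRing_inf, show toBoolRing (a ⊓ b) + toBoolRing a
        = toBoolRing (symmDiff (a ⊓ b) a) from (toBoolRing_symmDiff _ _).symm]
    congr 1
    rw [symmDiff_comm, symmDiff_of_ge inf_le_left]
    simp
  rw [this]

theorem quotCls_eq_iff {α : Type} [BooleanAlgebra α] (I : Ideal (AsBoolRing α)) (a b : α) :
    quotCls I a = quotCls I b ↔ toBoolRing (symmDiff a b) ∈ I := by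
  show (toBoolAlg (Ideal.Quotient.mk I (toBoolRing a)) : AsBoolAlg (AsBoolRing α ⧸ I))
      = toBoolAlg (Ideal.Quotient.mk I (toBoolRing b)) ↔ _
  rw [toBoolAlg.apply_eq_iff_eq, Ideal.Quotient.mk_eq_mk_iff_sub_mem, sub_eq_add_neg,
    BooleanRing.neg_eq, ← toBoolRing_symmDiff]

theorem quotCls_inf {α : Type} [BooleanAlgebra α] (I : Ideal (AsBoolRing α)) (a b : α) :
    quotCls I a ⊓ quotCls I b = quotCls I (a ⊓ b) := by
  show (toBoolAlg (Ideal.Quotient.mk I (toBoolRing a)) : AsBoolAlg (AsBoolRing α ⧸ I))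
      ⊓ toBoolAlg (Ideal.Quotient.mk I (toBoolRing b)) = toBoolAlg (Ideal.Quotient.mk I (toBoolRing (a ⊓ b)))
  rw [← toBoolAlg_mul, ← map_mul, ← toBoolRing_inf]

theorem quotCls_sup {α : Type} [BooleanAlgebra α] (I : Ideal (AsBoolRing α)) (a b : α) :
    quotCls I a ⊔ quotCls I b = quotCls I (a ⊔ b) := by
  show (toBoolAlg (Ideal.Quotient.mk I (toBoolRing a)) : AsBoolAlg (AsBoolRing α ⧸ I))
      ⊔ toBoolAlg (Ideal.Quotient.mk I (toBoolRing b)) = toBoolAlg (Ideal.Quotient.mk I (toBoolRing (a ⊔ b)))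
  rw [← toBoolAlg_add_add_mul, ← map_mul, ← map_add, ← map_add]
  congr 1
  rw [← symmDiff_symmDiff_inf a b]
  rfl

theorem quotCls_bot {α : Type} [BooleanAlgebra α] (I : Ideal (AsBoolRing α)) :
    quotCls I (⊥ : α) = ⊥ := by
  show (toBoolAlg (Ideal.Quotient.mk I (toBoolRing (⊥:α))) : AsBoolAlg (AsBoolRing α ⧸ I)) = ⊥
  rw [toBoolRing_bot, map_zero]
  rfl

theorem quotCls_surj {α : Type} [BooleanAlgebra α] (I : Ideal (AsBoolRing α)) :
    Function.Surjective (quotCls I) := by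
  intro b
  obtain ⟨x, hx⟩ := Ideal.Quotient.mk_surjective (ofBoolAlg (α := AsBoolRing α ⧸ I) b)
  exact ⟨ofBoolRing x, by unfold quotCls; simp [hx]; rfl⟩

/-! ### Specialization to the Cohen algebra -/

lemma mem_meagreIdeal {x : AsBoolRing BorelSets} :
    x ∈ meagreIdeal ↔ IsMeagre ((ofBoolRing x : BorelSets) : Set Cantor) := Iff.rfl

lemma cohenCls_le_iff (X Y : BorelSets) :
    cohenCls X ≤ cohenCls Y ↔ IsMeagre ((X : Set Cantor) \ (Y : Set Cantor)) := by
  unfold cohenCls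
  show (quotCls meagreIdeal X : quotAlg BorelSets meagreIdeal) ≤ quotCls meagreIdeal Y ↔ _
  rw [quotCls_le_iff, mem_meagreIdeal]
  rfl

lemma cohenCls_eq_iff (X Y : BorelSets) :
    cohenCls X = cohenCls Y ↔ IsMeagre (symmDiff (X : Set Cantor) (Y : Set Cantor)) := by
  unfold cohenCls
  show (quotCls meagreIdeal X : quotAlg BorelSets meagreIdeal) = quotCls meagreIdeal Y ↔ _
  rw [quotCls_eq_iff, mem_meagreIdeal]
  rfl

lemma cohenCls_inf (X Y : BorelSets) : cohenCls X ⊓ cohenCls Y = cohenCls (X ⊓ Y) :=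
  quotCls_inf _ _ _

lemma cohenCls_sup (X Y : BorelSets) : cohenCls X ⊔ cohenCls Y = cohenCls (X ⊔ Y) :=
  quotCls_sup _ _ _

lemma cohenCls_bot : cohenCls (⊥ : BorelSets) = ⊥ := quotCls_bot _

lemma cohenCls_eq_bot_iff (X : BorelSets) : cohenCls X = ⊥ ↔ IsMeagre (X : Set Cantor) := by
  rw [← cohenCls_bot, cohenCls_eq_iff]
  have : symmDiff (X : Set Cantor) ((⊥ : BorelSets) : Set Cantor) = (X : Set Cantor) := by
    show symmDiff (X : Set Cantor) ∅ = _
    simp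
  rw [this]

lemma cohenCls_surj : Function.Surjective cohenCls := quotCls_surj _

/-- the class of an open set equals the class of a Borel set Baire-equivalent to it -/
lemma cohenCls_congr {X Y : BorelSets} (h : IsMeagre (symmDiff (X : Set Cantor) (Y : Set Cantor))) :
    cohenCls X = cohenCls Y := (cohenCls_eq_iff X Y).mpr h

/-! ### Baire property -/

lemma residualEq_isMeagre_symmDiff {s u : Set Cantor} (h : s =ᵇ u) :
    IsMeagre (symmDiff s u) := by
  rw [IsMeagre]
  refine mem_of_superset h ?_
  intro z hz
  have hz' : (z ∈ s) = (z ∈ u) := hz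
  simp only [mem_compl_iff]
  intro hmem
  rcases hmem with ⟨hs, hu⟩ | ⟨hu, hs⟩
  · exact hu (hz' ▸ hs)
  · exact hs (hz' ▸ hu)

/-- Every Borel set differs from an open set by a meagre set. -/
lemma exists_open_symmDiff_meagre (X : BorelSets) :
    ∃ U : Set Cantor, IsOpen U ∧ IsMeagre (symmDiff (X : Set Cantor) U) := by
  obtain ⟨u, hu, hequ⟩ := X.2.residualEq_isOpen
  exact ⟨u, hu, residualEq_isMeagre_symmDiff hequ⟩

end
end S14
namespace S14
open Topology Filter Set

noncomputable section

/-- The class of a cylinder in the Cohen algebra. -/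
def clsCl (w : Cantor) (L : ℕ) : CohenAlg := cohenCls ⟨Cl w L, measurableSet_Cl w L⟩

lemma clsCl_ne_bot (w : Cantor) (L : ℕ) : clsCl w L ≠ ⊥ := by
  rw [clsCl, Ne, cohenCls_eq_bot_iff]
  exact not_isMeagre_Cl w L

lemma cohenCls_mono {X Y : BorelSets} (h : (X : Set Cantor) ⊆ (Y : Set Cantor)) :
    cohenCls X ≤ cohenCls Y := by
  rw [cohenCls_le_iff]
  have : (X : Set Cantor) \ (Y : Set Cantor) = ∅ := diff_eq_empty.mpr h
  rw [this]
  simpa using IsMeagre.empty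

lemma cohenCls_ne_bot_of_not_meagre {X : BorelSets} (h : ¬ IsMeagre (X : Set Cantor)) :
    cohenCls X ≠ ⊥ := fun hb => h ((cohenCls_eq_bot_iff X).mp hb)

/-- From `[B] ≤ [T]` with `T` closed, the open set associated to `B` is contained in `T`. -/
lemma open_subset_of_le {B : BorelSets} {U : Set Cantor} (hUo : IsOpen U)
    (hΔ : IsMeagre (symmDiff (B : Set Cantor) U)) {T : Set Cantor} (hT : IsClosed T)
    (hmT : MeasurableSet T) (h : cohenCls B ≤ cohenCls ⟨T, hmT⟩) : U ⊆ T := by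
  rw [cohenCls_le_iff] at h
  have hsub : U \ T ⊆ ((B : Set Cantor) \ T) ∪ symmDiff (B : Set Cantor) U := by
    intro z hz
    by_cases hzB : z ∈ (B : Set Cantor)
    · exact Or.inl ⟨hzB, hz.2⟩
    · exact Or.inr (Or.inr ⟨hz.1, hzB⟩)
  have hm : IsMeagre (U \ T) := (h.union' hΔ).mono hsub
  have : U \ T = ∅ := eq_empty_of_isOpen_isMeagre (hUo.sdiff hT) hm
  exact diff_eq_empty.mp this

/-- Antichains in the Cohen algebra are countable (ccc). -/
lemma countable_of_BAAntichain {C : Set CohenAlg} (hC : BAAntichain C) : C.Countable := by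
  classical
  choose B hB using fun c : C => cohenCls_surj c.1
  choose U hUo hΔ using fun c : C => exists_open_symmDiff_meagre (B c)
  have hBnm : ∀ c : C, ¬ IsMeagre ((B c : Set Cantor)) := by
    intro c hm
    exact hC.1 c.1 c.2 (by rw [← hB c, cohenCls_eq_bot_iff]; exact hm)
  have hne : ∀ c : C, (U c).Nonempty := by
    intro c
    rw [nonempty_iff_ne_empty]
    intro hUe
    apply hBnm c
    refine (hΔ c).mono ?_
    intro z hz
    exact Or.inl ⟨hz, by simp [hUe]⟩
  choose pt hpt using hne
  choose n hn using fun c : C => exists_Cl_subset (hUo c) (hpt c)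
  have hinj : Function.Injective (fun c : C => List.ofFn (fun i : Fin (n c) => pt c i)) := by
    intro c c' heq
    by_contra hcc
    have hlen : n c = n c' := by
      have := congrArg List.length heq
      simpa using this
    have hagree : ∀ i, i < n c → pt c i = pt c' i := by
      intro i hi
      have := congrArg (fun l => l.getD i false) heq
      simpa [List.getD_eq_getElem?_getD, List.getElem?_ofFn, hi, hlen ▸ hi] using this
    have hCl : Cl (pt c) (n c) ⊆ U c ∩ U c' := by
      refine subset_inter (hn c) ?_
      rw [Cl_eq_of_agree hagree, hlen]
      exact hn c'
    have hbot : c.1 ⊓ c'.1 = ⊥ := hC.2 c.1 c.2 c'.1 c'.2 (fun h => hcc (Subtype.ext h))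
    have hBB : IsMeagre ((B c : Set Cantor) ∩ (B c' : Set Cantor)) := by
      have : cohenCls (B c ⊓ B c') = ⊥ := by
        rw [← cohenCls_inf, hB, hB, hbot]
      exact (cohenCls_eq_bot_iff _).mp this
    apply not_isMeagre_Cl (pt c) (n c)
    refine ((hBB.union' (hΔ c)).union' (hΔ c')).mono ?_
    intro z hz
    have hzU : z ∈ U c := hCl hz |>.1
    have hzU' : z ∈ U c' := hCl hz |>.2
    by_cases h1 : z ∈ (B c : Set Cantor)
    · by_cases h2 : z ∈ (B c' : Set Cantor)
      · exact Or.inl (Or.inl ⟨h1, h2⟩)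
      · exact Or.inr (Or.inr ⟨hzU', h2⟩)
    · exact Or.inl (Or.inr (Or.inr ⟨hzU, h1⟩))
  rw [← Set.countable_coe_iff]
  rw [countable_iff_exists_injective]
  exact ⟨fun c => Encodable.encode (List.ofFn (fun i : Fin (n c) => pt c i)),
    fun c c' h => hinj (Encodable.encode_injective h)⟩

lemma maxAC_nonempty {C : Set CohenAlg} (hC : MaxAC C) : C.Nonempty := by
  have huniv : (⟨univ, MeasurableSet.univ⟩ : BorelSets) = ⊤ := rfl
  have : cohenCls ⟨univ, MeasurableSet.univ⟩ ≠ ⊥ :=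
    cohenCls_ne_bot_of_not_meagre not_isMeagre_univ
  obtain ⟨a, ha, -⟩ := hC.2 _ this
  exact ⟨a, ha⟩

/-- Full data for a maximal antichain: an enumeration, Borel representatives, open
approximations, and the fact that the union of the opens is comeagre. -/
lemma maxAC_data {C : Set CohenAlg} (hC : MaxAC C) :
    ∃ (e : ℕ → CohenAlg) (B : ℕ → BorelSets) (U : ℕ → Set Cantor),
      range e = C ∧ (∀ i, cohenCls (B i) = e i) ∧ (∀ i, IsOpen (U i)) ∧
      (∀ i, IsMeagre (symmDiff ((B i : Set Cantor)) (U i))) ∧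
      IsMeagre ((⋃ i, U i)ᶜ) := by
  obtain ⟨e, he⟩ := Set.Countable.exists_eq_range (countable_of_BAAntichain hC.1)
    (maxAC_nonempty hC)
  choose B hB using fun i => cohenCls_surj (e i)
  choose U hUo hΔ using fun i => exists_open_symmDiff_meagre (B i)
  refine ⟨e, B, U, he.symm, hB, hUo, hΔ, ?_⟩
  have hWm : MeasurableSet (⋃ i, (B i : Set Cantor)) := MeasurableSet.iUnion fun i => (B i).2
  have hWc : IsMeagre ((⋃ i, (B i : Set Cantor))ᶜ) := by
    by_contra hnm
    have hb : cohenCls ⟨(⋃ i, (B i : Set Cantor))ᶜ, hWm.compl⟩ ≠ ⊥ :=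
      cohenCls_ne_bot_of_not_meagre hnm
    obtain ⟨a, haC, hab⟩ := hC.2 _ hb
    rw [he] at haC
    obtain ⟨i, rfl⟩ := haC
    apply hab
    rw [← hB i, cohenCls_inf, cohenCls_eq_bot_iff]
    have : ((B i ⊓ ⟨(⋃ i, (B i : Set Cantor))ᶜ, hWm.compl⟩ : BorelSets) : Set Cantor) = ∅ := by
      show (B i : Set Cantor) ∩ (⋃ i, (B i : Set Cantor))ᶜ = ∅
      rw [← disjoint_iff_inter_eq_empty, disjoint_compl_right_iff_subset]
      exact subset_iUnion (fun i => (B i : Set Cantor)) i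
    rw [this]
    simpa using IsMeagre.empty
  refine (hWc.union' (isMeagre_iUnion fun i => hΔ i)).mono ?_
  intro z hz
  simp only [mem_compl_iff, mem_iUnion, not_exists] at hz
  by_cases hzW : z ∈ ⋃ i, (B i : Set Cantor)
  · obtain ⟨i, hzi⟩ := mem_iUnion.mp hzW
    exact Or.inr (mem_iUnion.mpr ⟨i, Or.inl ⟨hzi, hz i⟩⟩)
  · exact Or.inl hzW

/-- Representing a finite sup of classes of closed sets whose points satisfy `P`. -/
lemma sup_rep {P : Cantor → Prop} (F : Finset CohenAlg)
    (h : ∀ a ∈ F, ∃ (T : Set Cantor) (hm : MeasurableSet T), IsClosed T ∧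
      a = cohenCls ⟨T, hm⟩ ∧ ∀ z ∈ T, P z) :
    ∃ (T : Set Cantor) (hm : MeasurableSet T), IsClosed T ∧ F.sup id = cohenCls ⟨T, hm⟩ ∧
      ∀ z ∈ T, P z := by
  classical
  induction F using Finset.induction_on with
  | empty =>
      refine ⟨∅, MeasurableSet.empty, isClosed_empty, ?_, by simp⟩
      rw [Finset.sup_empty, ← cohenCls_bot]
      rfl
  | @insert a F ha ih =>
      obtain ⟨T, hm, hTc, hTa, hTP⟩ := h a (Finset.mem_insert_self a F)
      obtain ⟨T', hm', hTc', hTa', hTP'⟩ := ih fun b hb => h b (Finset.mem_insert_of_mem hb)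
      refine ⟨T ∪ T', hm.union hm', hTc.union hTc', ?_, ?_⟩
      · rw [Finset.sup_insert, hTa', id, hTa, cohenCls_sup]
        rfl
      · intro z hz
        rcases hz with hz | hz
        · exact hTP z hz
        · exact hTP' z hz

end
end S14
namespace S14
open Topology Filter Set

noncomputable section

/-! ### Chopped reals: patterns, match sets, and the canonical meagre sets -/

/-- Overwrite `τ` below `n` by `g`. -/
def ovw (g : Cantor) (n : ℕ) (τ : Cantor) : Cantor := fun i => if i < n then g i else τ i

/-- `z` agrees with the pattern `x` on the `n`-th block of the interval partition `m`. -/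
def matchAt (m : ℕ → ℕ) (x z : Cantor) (n : ℕ) : Prop :=
  ∀ i, m n ≤ i → i < m (n+1) → z i = x i

/-- Points with no match at any block `≥ k`. -/
def NM (m : ℕ → ℕ) (x : Cantor) (k : ℕ) : Set Cantor :=
  {z | ∀ n, k ≤ n → ¬ matchAt m x z n}

/-- The canonical meagre set associated to a chopped real: finitely many matches. -/
def Mset (m : ℕ → ℕ) (x : Cantor) : Set Cantor := ⋃ k, NM m x k

lemma matchAt_of_agree {m : ℕ → ℕ} {x z z' : Cantor} {n : ℕ}
    (hag : ∀ i, i < m (n+1) → z i = z' i) (h : matchAt m x z' n) : matchAt m x z n :=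
  fun i h1 h2 => (hag i h2).trans (h i h1 h2)

lemma isOpen_matchAt (m : ℕ → ℕ) (x : Cantor) (n : ℕ) :
    IsOpen {z : Cantor | matchAt m x z n} := by
  have : {z : Cantor | matchAt m x z n}
      = ⋂ i ∈ Finset.Ico (m n) (m (n+1)), (fun z : Cantor => z i) ⁻¹' {x i} := by
    ext z
    simp only [mem_setOf_eq, mem_iInter, Finset.mem_Ico, mem_preimage, mem_singleton_iff]
    exact ⟨fun h i hi => h i hi.1 hi.2, fun h i h1 h2 => h i ⟨h1, h2⟩⟩
  rw [this]
  exact isOpen_biInter_finset fun i _ =>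
    (continuous_apply i).isOpen_preimage _ (isOpen_discrete _)

lemma isMeagre_NM {m : ℕ → ℕ} (hm : StrictMono m) (x : Cantor) (k : ℕ) :
    IsMeagre (NM m x k) := by
  rw [IsMeagre]
  apply residual_of_dense_open
  · have : (NM m x k)ᶜ = ⋃ n, {z : Cantor | k ≤ n ∧ matchAt m x z n} := by
      ext z
      simp only [NM, mem_compl_iff, mem_setOf_eq, mem_iUnion]
      push_neg
      constructor
      · rintro ⟨n, h1, h2⟩; exact ⟨n, h1, h2⟩
      · rintro ⟨n, h1, h2⟩; exact ⟨n, h1, h2⟩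
    rw [this]
    refine isOpen_iUnion fun n => ?_
    by_cases hk : k ≤ n
    · have : {z : Cantor | k ≤ n ∧ matchAt m x z n} = {z | matchAt m x z n} := by
        ext z; simp [hk]
      rw [this]; exact isOpen_matchAt m x n
    · have : {z : Cantor | k ≤ n ∧ matchAt m x z n} = ∅ := by
        ext z; simp [hk]
      rw [this]; exact isOpen_empty
  · rw [dense_iff_inter_open]
    rintro V hV ⟨v, hv⟩
    obtain ⟨L, hL⟩ := exists_Cl_subset hV hv
    set n := max k L with hn
    have hmn : L ≤ m n := le_trans (le_max_right k L) (hm.le_apply)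
    refine ⟨ovw v (m n) x, hL fun i hi => ?_, ?_⟩
    · simp [ovw, lt_of_lt_of_le hi hmn]
    · simp only [mem_compl_iff, NM, mem_setOf_eq]
      push_neg
      refine ⟨n, le_max_left k L, fun i h1 h2 => ?_⟩
      simp [ovw, not_lt.mpr h1]

lemma isMeagre_Mset {m : ℕ → ℕ} (hm : StrictMono m) (x : Cantor) :
    IsMeagre (Mset m x) :=
  isMeagre_iUnion fun k => isMeagre_NM hm x k

lemma not_mem_Mset_iff {m : ℕ → ℕ} {x z : Cantor} :
    z ∉ Mset m x ↔ ∀ k, ∃ n, k ≤ n ∧ matchAt m x z n := by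
  simp only [Mset, mem_iUnion, not_exists, NM, mem_setOf_eq]
  push_neg
  rfl

/-! ### The uniform capture construction -/

lemma exists_cl_capture (𝒰 : ℕ → Set Cantor) (hUo : ∀ j, IsOpen (𝒰 j))
    (hD : Dense (⋃ j, 𝒰 j)) (g : Cantor) (L : ℕ) :
    ∃ (g' : Cantor) (L' : ℕ), L < L' ∧ (∀ i, i < L → g' i = g i) ∧
      ∃ j, Cl g' L' ⊆ 𝒰 j := by
  obtain ⟨w, hw1, hw2⟩ := hD.inter_open_nonempty (Cl g L) (isOpen_Cl g L) ⟨g, self_mem_Cl g L⟩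
  obtain ⟨j, hj⟩ := mem_iUnion.mp hw2
  obtain ⟨nw, hnw⟩ := exists_Cl_subset (hUo j) hj
  exact ⟨w, max (L+1) nw, lt_of_lt_of_le (Nat.lt_succ_self L) (le_max_left _ _),
    fun i hi => hw1 i hi, j, subset_trans (Cl_anti w (le_max_right _ _)) hnw⟩

lemma allcap (𝒰 : ℕ → Set Cantor) (hUo : ∀ j, IsOpen (𝒰 j)) (hD : Dense (⋃ j, 𝒰 j)) (L : ℕ) :
    ∃ (L' : ℕ) (τ : Cantor), L < L' ∧ ∀ σ : Cantor, ∃ j, Cl (ovw σ L τ) L' ⊆ 𝒰 j := by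
  classical
  suffices h : ∀ s : Finset (Fin L → Bool), ∃ (L' : ℕ) (τ : Cantor), L < L' ∧
      ∀ σ : Cantor, (fun i : Fin L => σ i) ∈ s → ∃ j, Cl (ovw σ L τ) L' ⊆ 𝒰 j by
    obtain ⟨L', τ, h1, h2⟩ := h Finset.univ
    exact ⟨L', τ, h1, fun σ => h2 σ (Finset.mem_univ _)⟩
  intro s
  induction s using Finset.induction_on with
  | empty => exact ⟨L+1, fun _ => false, Nat.lt_succ_self L, fun σ hσ => absurd hσ (by simp)⟩
  | @insert σ₀ s hσ₀ ih =>
      obtain ⟨L', τ, hL', hτ⟩ := ih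
      set g : Cantor := ovw (fun i => if h : i < L then σ₀ ⟨i, h⟩ else false) L τ with hg
      obtain ⟨g'', L'', hlt, hagree, j₀, hcap⟩ := exists_cl_capture 𝒰 hUo hD g L'
      refine ⟨L'', g'', lt_trans hL' hlt, ?_⟩
      intro σ hσ
      rcases Finset.mem_insert.mp hσ with h0 | hs
      · refine ⟨j₀, fun z hz => hcap ?_⟩
        intro i hi
        by_cases hiL : i < L
        · have e1 : z i = σ i := hz i hi ▸ by simp [ovw, hiL]
          have e2 : σ i = σ₀ ⟨i, hiL⟩ := by
            have := congrFun h0 ⟨i, hiL⟩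
            exact this
          have e3 : g'' i = g i := hagree i (lt_trans hiL hL')
          have e4 : g i = σ₀ ⟨i, hiL⟩ := by simp [hg, ovw, hiL]
          rw [e1, e2, e3, e4]
        · have e1 : z i = g'' i := by
            have := hz i hi
            simpa [ovw, hiL] using this
          exact e1
      · obtain ⟨j, hj⟩ := hτ σ hs
        refine ⟨j, subset_trans ?_ hj⟩
        refine Cl_subset_Cl (le_of_lt hlt) ?_
        intro i hi
        by_cases hiL : i < L
        · simp [ovw, hiL]
        · have : g'' i = g i := hagree i hi
          simp only [ovw, if_neg hiL]
          rw [this, hg]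
          simp [ovw, hiL]

/-- The iterated capture construction: a pattern capturing into the `n`-th family on
the `n`-th block, uniformly over all prefixes. -/
lemma build_pattern (𝒰 : ℕ → ℕ → Set Cantor) (hUo : ∀ n j, IsOpen (𝒰 n j))
    (hD : ∀ n, Dense (⋃ j, 𝒰 n j)) :
    ∃ (m : ℕ → ℕ) (x : Cantor), StrictMono m ∧ m 0 = 0 ∧
      ∀ (n : ℕ) (σ : Cantor), ∃ j, Cl (ovw σ (m n) x) (m (n+1)) ⊆ 𝒰 n j := by
  classical
  have step : ∀ (n : ℕ) (p : ℕ × Cantor), ∃ q : ℕ × Cantor, p.1 < q.1 ∧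
      (∀ i, i < p.1 → q.2 i = p.2 i) ∧ ∀ σ, ∃ j, Cl (ovw σ p.1 q.2) q.1 ⊆ 𝒰 n j := by
    intro n p
    obtain ⟨L', τ, hL', hτ⟩ := allcap (𝒰 n) (hUo n) (hD n) p.1
    refine ⟨(L', fun i => if i < p.1 then p.2 i else τ i), hL', fun i hi => by simp [hi], ?_⟩
    intro σ
    obtain ⟨j, hj⟩ := hτ σ
    refine ⟨j, ?_⟩
    have : ovw σ p.1 (fun i => if i < p.1 then p.2 i else τ i) = ovw σ p.1 τ := by
      funext i
      by_cases hi : i < p.1 <;> simp [ovw, hi]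
    rw [this]
    exact hj
  choose stepf h1 h2 h3 using step
  set f : ℕ → ℕ × Cantor := fun n => Nat.rec (0, fun _ => false) (fun n p => stepf n p) n with hf
  have hfs : ∀ n, f (n+1) = stepf n (f n) := fun n => rfl
  set m : ℕ → ℕ := fun n => (f n).1 with hm
  have hmono : StrictMono m := strictMono_nat_of_lt_succ fun n => by
    show (f n).1 < (f (n+1)).1
    rw [hfs n]; exact h1 n (f n)
  have agree : ∀ n n', n ≤ n' → ∀ i, i < m n → (f n').2 i = (f n).2 i := by
    intro n n' hn
    induction n' , hn using Nat.le_induction with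
    | base => intro i _; rfl
    | succ n' hn' ih =>
        intro i hi
        rw [hfs n']
        rw [h2 n' (f n') i (lt_of_lt_of_le hi (hmono.le_iff_le.mpr hn'))]
        exact ih i hi
  set x : Cantor := fun i => (f (i+1)).2 i with hx
  have x_eq : ∀ n i, i < m n → x i = (f n).2 i := by
    intro n i hi
    rcases le_total n (i+1) with h | h
    · exact agree n (i+1) h i hi
    · exact (agree (i+1) n h i (lt_of_lt_of_le (Nat.lt_succ_self i) (hmono.le_apply))).symm
  refine ⟨m, x, hmono, rfl, ?_⟩
  intro n σ
  obtain ⟨j, hj⟩ := h3 n (f n) σ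
  refine ⟨j, ?_⟩
  have : Cl (ovw σ (m n) x) (m (n+1)) = Cl (ovw σ (m n) (f (n+1)).2) (m (n+1)) := by
    apply Cl_eq_of_agree
    intro i hi
    by_cases hiL : i < m n
    · simp [ovw, hiL]
    · simp only [ovw, if_neg hiL]
      exact x_eq (n+1) i hi
  rw [this]
  show Cl (ovw σ (f n).1 (f (n+1)).2) ((f (n+1)).1) ⊆ 𝒰 n j
  rw [hfs n]
  exact hj

/-! ### The chopped-real covering lemma -/

lemma chopped {M : Set Cantor} (hM : IsMeagre M) :
    ∃ (m : ℕ → ℕ) (x : Cantor), StrictMono m ∧ M ⊆ Mset m x := by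
  rw [IsMeagre, mem_residual_iff] at hM
  obtain ⟨S, hSo, hSd, hSc, hSsub⟩ := hM
  obtain ⟨E, hE⟩ := (hSc.insert univ).exists_eq_range ⟨univ, mem_insert _ _⟩
  have hEmem : ∀ j, E j ∈ insert univ S := fun j => hE ▸ mem_range_self j
  have hEo : ∀ j, IsOpen (E j) := by
    intro j
    rcases hEmem j with h | h
    · rw [h]; exact isOpen_univ
    · exact hSo _ h
  have hEd : ∀ j, Dense (E j) := by
    intro j
    rcases hEmem j with h | h
    · rw [h]; exact dense_univ
    · exact hSd _ h
  set D : ℕ → Set Cantor := fun n => ⋂ j ∈ Finset.range (n+1), E j with hD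
  have hDo : ∀ n, IsOpen (D n) := fun n => isOpen_biInter_finset fun j _ => hEo j
  have hDd : ∀ n, Dense (D n) := by
    intro n
    induction n with
    | zero => simpa [hD] using hEd 0
    | succ n ih =>
        have heq : D (n+1) = E (n+1) ∩ D n := by
          show (⋂ j ∈ Finset.range (n+2), E j) = E (n+1) ∩ ⋂ j ∈ Finset.range (n+1), E j
          rw [Finset.range_add_one, Finset.set_biInter_insert]
        have hd2 : Dense (D n ∩ E (n+1)) := Dense.inter_of_isOpen_left ih (hEd (n+1)) (hDo n)
        rw [heq, inter_comm]
        exact hd2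
  have hDsub : ∀ j n, j ≤ n → D n ⊆ E j := by
    intro j n hj z hz
    have hz0 : z ∈ ⋂ j ∈ Finset.range (n+1), E j := hz
    have hz' : ∀ i ∈ Finset.range (n+1), z ∈ E i := by
      simpa [mem_iInter] using hz0
    exact hz' j (Finset.mem_range.mpr (Nat.lt_succ_of_le hj))
  obtain ⟨m, x, hsm, -, hcap⟩ := build_pattern (fun n _ => D n) (fun n _ => hDo n)
    (fun n => by rw [iUnion_const]; exact hDd n)
  refine ⟨m, x, hsm, ?_⟩
  intro z hz
  by_contra hzM
  rw [not_mem_Mset_iff] at hzM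
  have hzin : z ∈ ⋂₀ S := by
    intro t ht
    have : t ∈ range E := hE ▸ mem_insert_of_mem _ ht
    obtain ⟨j, rfl⟩ := this
    obtain ⟨n, hjn, hmatch⟩ := hzM j
    have hcl : z ∈ Cl (ovw z (m n) x) (m (n+1)) := by
      intro i hi
      by_cases hiL : i < m n
      · simp [ovw, hiL]
      · simp only [ovw, if_neg hiL]
        exact hmatch i (not_lt.mp hiL) hi
    obtain ⟨-, hj⟩ := hcap n z
    exact hDsub j n hjn (hj hcl)
  exact (hSsub hzin) hz

/-! ### Capture pairs for maximal antichains -/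

lemma capture_pair {U : ℕ → Set Cantor} (hUo : ∀ j, IsOpen (U j))
    (hD : IsMeagre ((⋃ j, U j)ᶜ)) :
    ∃ (mJ : ℕ → ℕ) (y : Cantor), StrictMono mJ ∧
      ∀ (n : ℕ) (σ : Cantor), ∃ j, Cl (ovw σ (mJ n) y) (mJ (n+1)) ⊆ U j := by
  have hdense : Dense (⋃ j, U j) := by
    apply dense_of_mem_residual
    rw [IsMeagre] at hD
    rwa [compl_compl] at hD
  obtain ⟨m, y, h1, -, h3⟩ := build_pattern (fun _ j => U j) (fun _ j => hUo j) (fun _ => hdense)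
  exact ⟨m, y, h1, h3⟩

end
end S14
namespace S14
open Topology Filter Set

noncomputable section

/-- The engulfing property of one chopped real by another. -/
def Engulf (mI : ℕ → ℕ) (x : Cantor) (mJ : ℕ → ℕ) (y : Cantor) (n : ℕ) : Prop :=
  ∃ mm, mI n ≤ mJ mm ∧ mJ (mm+1) ≤ mI (n+1) ∧
    ∀ i, mJ mm ≤ i → i < mJ (mm+1) → x i = y i

/-- The key combinatorial lemma: if the meagre set of `(mJ, y)` is contained in that of
`(mI, x)`, then all sufficiently late `I`-blocks engulf an agreeing `J`-block. -/
lemma engulf_of_subset {mI mJ : ℕ → ℕ} {x y : Cantor} (hI : StrictMono mI)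
    (hJ : StrictMono mJ) (hsub : Mset mJ y ⊆ Mset mI x) :
    ∃ N, ∀ n, N ≤ n → Engulf mI x mJ y n := by
  classical
  by_contra hcon
  push_neg at hcon
  have hbad : ∀ N, ∃ n, N ≤ n ∧ ¬ Engulf mI x mJ y n := hcon
  -- build a sparse sequence of bad blocks
  set g : ℕ → ℕ := fun k => Nat.rec (Classical.choose (hbad 0))
    (fun _ p => Classical.choose (hbad (p+2))) k with hg
  have hg0 : ¬ Engulf mI x mJ y (g 0) := (Classical.choose_spec (hbad 0)).2
  have hgs : ∀ k, g (k+1) = Classical.choose (hbad (g k + 2)) := fun k => rfl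
  have hgbad : ∀ k, ¬ Engulf mI x mJ y (g k) := by
    intro k
    cases k with
    | zero => exact hg0
    | succ k =>
        rw [hgs k]
        exact (Classical.choose_spec (hbad (g k + 2))).2
  have hggap : ∀ k, g k + 2 ≤ g (k+1) := by
    intro k
    rw [hgs k]
    exact (Classical.choose_spec (hbad (g k + 2))).1
  have hgmono : ∀ k k', k < k' → g k < g k' := by
    intro k k' hk
    induction k', hk using Nat.le_induction with
    | base => exact lt_of_lt_of_le (by omega) (hggap k)
    | succ k' hk' ih => exact lt_of_lt_of_le (by omega) (hggap k')
  have hgge : ∀ k, k ≤ g k := by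
    intro k
    induction k with
    | zero => exact Nat.zero_le _
    | succ k ih => exact le_trans (by omega) (hggap k)
  -- the diagonal point
  set cov : ℕ → Prop := fun i => ∃ k, mI (g k) ≤ i ∧ i < mI (g k + 1) with hcov
  set z : Cantor := fun i => if cov i then x i else !(y i) with hz
  have hzcov : ∀ i, cov i → z i = x i := by
    intro i hi; simp [hz, hi]
  have hzncov : ∀ i, ¬ cov i → z i = !(y i) := by
    intro i hi; simp [hz, hi]
  -- z matches x at every block g k
  have hzmatch : ∀ k, matchAt mI x z (g k) := by
    intro k i h1 h2
    exact hzcov i ⟨k, h1, h2⟩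
  -- z never matches y
  have hznm : z ∈ NM mJ y 0 := by
    intro mm _ hmatch
    by_cases hc : ∀ i, mJ mm ≤ i → i < mJ (mm+1) → cov i
    · -- the whole J-block is covered; it sits inside a single bad I-block
      obtain ⟨k₀, hk₀1, hk₀2⟩ := hc (mJ mm) le_rfl (hJ (Nat.lt_succ_self mm))
      have hblock : ∀ i, mJ mm ≤ i → i < mJ (mm+1) → i < mI (g k₀ + 1) := by
        intro i hi1 hi2
        by_contra hbig
        push_neg at hbig
        have hjstar : mJ mm ≤ mI (g k₀ + 1) ∧ mI (g k₀ + 1) < mJ (mm + 1) := by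
          constructor
          · exact le_of_lt hk₀2
          · exact lt_of_le_of_lt hbig hi2
        obtain ⟨k'', hk''1, hk''2⟩ := hc _ hjstar.1 hjstar.2
        -- mI (g k'') ≤ mI (g k₀ + 1) < mI (g k'' + 1)
        have e1 : g k'' ≤ g k₀ + 1 := by
          by_contra he
          push_neg at he
          exact absurd (hI.lt_iff_lt.mpr he) (not_lt.mpr hk''1)
        have e2 : g k₀ + 1 < g k'' + 1 := by
          have : g k₀ + 1 < g k'' + 1 ∨ g k'' ≤ g k₀ := by omega
          rcases this with h | h
          · exact h
          · exfalso
            have : mI (g k'' + 1) ≤ mI (g k₀ + 1) := hI.monotone (by omega)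
            omega
        have e3 : g k'' = g k₀ + 1 := by omega
        rcases lt_trichotomy k'' k₀ with h | h | h
        · have := hgmono k'' k₀ h; omega
        · rw [h] at e3; omega
        · have := hgmono k₀ k'' h
          have := hggap k₀
          have hge : g (k₀ + 1) ≤ g k'' := by
            rcases Nat.lt_or_ge k'' (k₀+1) with hh | hh
            · omega
            · rcases Nat.eq_or_lt_of_le hh with hh' | hh'
              · rw [← hh']
              · exact le_of_lt (hgmono (k₀+1) k'' hh')
          omega
      -- the bad block g k₀ fails to engulf, so there is a disagreement
      have : ¬ (∀ i, mJ mm ≤ i → i < mJ (mm+1) → x i = y i) := by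
        intro hagree
        apply hgbad k₀
        refine ⟨mm, hk₀1, ?_, hagree⟩
        have h1 : mJ mm < mJ (mm+1) := hJ (Nat.lt_succ_self mm)
        have := hblock (mJ (mm+1) - 1) (by omega) (by omega)
        omega
      push_neg at this
      obtain ⟨i, hi1, hi2, hixy⟩ := this
      have : z i = x i := hzcov i (hc i hi1 hi2)
      rw [hmatch i hi1 hi2] at this
      exact hixy this.symm
    · push_neg at hc
      obtain ⟨i, hi1, hi2, hic⟩ := hc
      have h1 : z i = !(y i) := hzncov i hic
      rw [hmatch i hi1 hi2] at h1
      exact (Bool.not_ne_self (y i)) h1.symm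
  have hzM : z ∈ Mset mI x := hsub (mem_iUnion.mpr ⟨0, hznm⟩)
  obtain ⟨K, hK⟩ := mem_iUnion.mp hzM
  exact hK (g K) (hgge K) (hzmatch K)

end
end S14
namespace S14
open Topology Filter Set

noncomputable section

/-! ### The block antichains -/

/-- First-match generator for the level-`k` block antichain. -/
def gen1 (m : ℕ → ℕ) (x : Cantor) (k n : ℕ) (w : Cantor) : Prop :=
  k ≤ n ∧ matchAt m x w n ∧ ∀ j, k ≤ j → j < n → ¬ matchAt m x w j

/-- The `k`-th block antichain of a chopped real. -/
def ACk (m : ℕ → ℕ) (x : Cantor) (k : ℕ) : Set CohenAlg :=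
  {a | ∃ n w, gen1 m x k n w ∧ a = clsCl w (m (n+1))}

/-- Page head predicate. -/
def pg (k : ℕ) (w : Cantor) : Prop := (∀ i, i < k → w i = true) ∧ w k = false

/-- Paged first-match generator. -/
def gen2 (m : ℕ → ℕ) (x : Cantor) (k n : ℕ) (w : Cantor) : Prop :=
  pg k w ∧ k+1 ≤ n ∧ matchAt m x w n ∧ ∀ j, k+1 ≤ j → j < n → ¬ matchAt m x w j

/-- The paged antichain of a chopped real. -/
def PAC (m : ℕ → ℕ) (x : Cantor) : Set CohenAlg :=
  {a | ∃ k n w, gen2 m x k n w ∧ a = clsCl w (m (n+1))}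

lemma inf_eq_bot_of_disjoint {w w' : Cantor} {L L' : ℕ}
    (h : Cl w L ∩ Cl w' L' = ∅) : clsCl w L ⊓ clsCl w' L' = ⊥ := by
  rw [clsCl, clsCl, cohenCls_inf, cohenCls_eq_bot_iff]
  show IsMeagre (Cl w L ∩ Cl w' L')
  rw [h]
  simpa using IsMeagre.empty

lemma cylinders_disjoint_of_fm {m : ℕ → ℕ} {x : Cantor} (hm : StrictMono m)
    {k n n' : ℕ} {w w' : Cantor} (hmatch : matchAt m x w n)
    (hfm' : ∀ j, k ≤ j → j < n' → ¬ matchAt m x w' j) (hkn : k ≤ n) (hnn' : n < n') :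
    Cl w (m (n+1)) ∩ Cl w' (m (n'+1)) = ∅ := by
  rw [eq_empty_iff_forall_notMem]
  rintro z ⟨hz1, hz2⟩
  have hnm : ¬ matchAt m x w' n := hfm' n hkn hnn'
  apply hnm
  intro i h1 h2
  have e1 : z i = w' i := hz2 i (lt_of_lt_of_le h2 (hm.monotone (by omega)))
  have e2 : z i = w i := hz1 i h2
  rw [← e1, e2]
  exact hmatch i h1 h2

lemma clsCl_eq_of_agree {w w' : Cantor} {L : ℕ} (h : ∀ i, i < L → w i = w' i) :
    clsCl w L = clsCl w' L := by
  unfold clsCl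
  congr 1
  exact Subtype.ext (Cl_eq_of_agree h)

/-- Pairwise disjointness for `ACk`. -/
lemma ACk_antichain {m : ℕ → ℕ} {x : Cantor} (hm : StrictMono m) (k : ℕ) :
    BAAntichain (ACk m x k) := by
  constructor
  · rintro a ⟨n, w, -, rfl⟩
    exact clsCl_ne_bot w (m (n+1))
  · rintro a ⟨n, w, hg, rfl⟩ b ⟨n', w', hg', rfl⟩ hab
    rcases lt_trichotomy n n' with h | h | h
    · exact inf_eq_bot_of_disjoint
        (cylinders_disjoint_of_fm hm hg.2.1 hg'.2.2 hg.1 h)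
    · subst h
      by_cases hdisj : Cl w (m (n+1)) ∩ Cl w' (m (n+1)) = ∅
      · exact inf_eq_bot_of_disjoint hdisj
      · exfalso
        obtain ⟨z, hz1, hz2⟩ := nonempty_iff_ne_empty.mpr hdisj
        exact hab (clsCl_eq_of_agree fun i hi => (hz1 i hi).symm.trans (hz2 i hi))
    · rw [inf_comm]
      exact inf_eq_bot_of_disjoint
        (cylinders_disjoint_of_fm hm hg'.2.1 hg.2.2 hg'.1 h)

/-- Pairwise disjointness for `PAC`. -/
lemma PAC_antichain {m : ℕ → ℕ} {x : Cantor} (hm : StrictMono m) :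
    BAAntichain (PAC m x) := by
  have hhead : ∀ (k n : ℕ) (w : Cantor), gen2 m x k n w → k < m (n+1) := by
    intro k n w hg
    have : k < n := hg.2.1
    exact lt_of_lt_of_le this (le_trans (hm.le_apply) (le_of_lt (hm (Nat.lt_succ_self n))))
  have hdiffpage : ∀ (k n : ℕ) (w : Cantor) (k' n' : ℕ) (w' : Cantor),
      gen2 m x k n w → gen2 m x k' n' w' → k < k' →
      Cl w (m (n+1)) ∩ Cl w' (m (n'+1)) = ∅ := by
    intro k n w k' n' w' hg hg' hkk
    rw [eq_empty_iff_forall_notMem]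
    rintro z ⟨hz1, hz2⟩
    have e1 : z k = w k := hz1 k (lt_of_lt_of_le (hhead k n w hg) le_rfl)
    have e2 : z k = w' k := hz2 k (lt_trans hkk (hhead k' n' w' hg'))
    rw [hg.1.2] at e1
    rw [hg'.1.1 k hkk] at e2
    rw [e1] at e2
    exact Bool.false_ne_true e2
  constructor
  · rintro a ⟨k, n, w, -, rfl⟩
    exact clsCl_ne_bot w (m (n+1))
  · rintro a ⟨k, n, w, hg, rfl⟩ b ⟨k', n', w', hg', rfl⟩ hab
    rcases lt_trichotomy k k' with hk | hk | hk
    · exact inf_eq_bot_of_disjoint (hdiffpage k n w k' n' w' hg hg' hk)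
    · subst hk
      rcases lt_trichotomy n n' with h | h | h
      · exact inf_eq_bot_of_disjoint
          (cylinders_disjoint_of_fm hm hg.2.2.1 hg'.2.2.2 hg.2.1 h)
      · subst h
        by_cases hdisj : Cl w (m (n+1)) ∩ Cl w' (m (n+1)) = ∅
        · exact inf_eq_bot_of_disjoint hdisj
        · exfalso
          obtain ⟨z, hz1, hz2⟩ := nonempty_iff_ne_empty.mpr hdisj
          exact hab (clsCl_eq_of_agree fun i hi => (hz1 i hi).symm.trans (hz2 i hi))
      · rw [inf_comm]
        exact inf_eq_bot_of_disjoint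
          (cylinders_disjoint_of_fm hm hg'.2.2.1 hg.2.2.2 hg'.2.1 h)
    · rw [inf_comm]
      exact inf_eq_bot_of_disjoint (hdiffpage k' n' w' k n w hg' hg hk)

/-- The combinatorial extension lemma: below any cylinder there is a first-match generator. -/
lemma core_ext {m : ℕ → ℕ} (hm : StrictMono m) (x : Cantor) (k : ℕ) (u₀ : Cantor) (N : ℕ) :
    ∃ n w, gen1 m x k n w ∧ (∀ i, i < N → w i = u₀ i) ∧
      (Cl w (m (n+1)) ⊆ Cl u₀ N ∨ Cl u₀ N ⊆ Cl w (m (n+1))) := by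
  classical
  set T := {n | k ≤ n ∧ matchAt m x u₀ n ∧ m (n+1) ≤ N} with hT
  by_cases hTne : T.Nonempty
  · set n₀ := sInf T with hn₀
    obtain ⟨hk₀, hmatch₀, hle₀⟩ := Nat.sInf_mem hTne
    refine ⟨n₀, u₀, ⟨hk₀, hmatch₀, ?_⟩, fun i _ => rfl, Or.inr (Cl_anti u₀ hle₀)⟩
    intro j hj1 hj2 hmj
    have hjT : j ∈ T := ⟨hj1, hmj, le_trans (hm.monotone (by omega)) (le_trans
      (le_of_lt (hm (Nat.lt_succ_self n₀))) hle₀)⟩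
    exact absurd (Nat.sInf_le hjT) (by omega)
  · set n' := max k N with hn'
    set w : Cantor := fun i => if i < N then u₀ i
      else if m n' ≤ i ∧ i < m (n'+1) then x i else !(x i) with hw
    have hNm : N ≤ m n' := le_trans (le_max_right k N) hm.le_apply
    have hmatch : matchAt m x w n' := by
      intro i h1 h2
      have : ¬ i < N := by omega
      simp [hw, this, h1, h2]
    refine ⟨n', w, ⟨le_max_left k N, hmatch, ?_⟩, fun i hi => by simp [hw, hi], ?_⟩
    · intro j hj1 hj2 hmj
      by_cases hjN : m (j+1) ≤ N
      · apply hTne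
        refine ⟨j, hj1, ?_, hjN⟩
        intro i h1 h2
        have hiN : i < N := lt_of_lt_of_le h2 hjN
        have := hmj i h1 h2
        rwa [show w i = u₀ i from by simp [hw, hiN]] at this
      · push_neg at hjN
        set i := max (m j) N with hi
        have h1 : m j ≤ i := le_max_left _ _
        have h2 : i < m (j+1) := by
          have h3 : m j < m (j+1) := hm (Nat.lt_succ_self j)
          rw [hi]
          omega
        have hwi : w i = !(x i) := by
          have e1 : ¬ i < N := by rw [hi]; omega
          have e2 : ¬ (m n' ≤ i ∧ i < m (n'+1)) := by
            rintro ⟨hc, -⟩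
            have : m (j+1) ≤ m n' := hm.monotone (by omega)
            omega
          simp [hw, e1, e2]
        have := hmj i h1 h2
        rw [hwi] at this
        exact (Bool.not_ne_self (x i)) this
    · left
      refine Cl_subset_Cl (le_trans hNm (le_of_lt (hm (Nat.lt_succ_self n')))) ?_
      intro i hi
      simp [hw, hi]

end
end S14
namespace S14
open Topology Filter Set

noncomputable section

lemma open_nonempty_of_rep {B : BorelSets} {U : Set Cantor}
    (hΔ : IsMeagre (symmDiff (B : Set Cantor) U)) (hBnm : ¬ IsMeagre (B : Set Cantor)) :
    U.Nonempty := by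
  rw [nonempty_iff_ne_empty]
  intro hUe
  apply hBnm
  refine hΔ.mono ?_
  intro z hz
  exact Or.inl ⟨hz, by simp [hUe]⟩

lemma meet_ne_bot_of_cyl {b : CohenAlg} {B : BorelSets} (hB : cohenCls B = b)
    {U : Set Cantor} (hΔ : IsMeagre (symmDiff (B : Set Cantor) U))
    {w : Cantor} {L : ℕ} {v : Cantor} {L₀ : ℕ}
    (h1 : Cl v L₀ ⊆ Cl w L) (h2 : Cl v L₀ ⊆ U) : clsCl w L ⊓ b ≠ ⊥ := by
  rw [← hB, clsCl, cohenCls_inf, Ne, cohenCls_eq_bot_iff]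
  intro hme
  have hme' : IsMeagre (Cl w L ∩ (B : Set Cantor)) := hme
  have hsub : Cl v L₀ \ symmDiff (B : Set Cantor) U ⊆ Cl w L ∩ (B : Set Cantor) := by
    rintro z ⟨hzv, hzΔ⟩
    refine ⟨h1 hzv, ?_⟩
    by_contra hzB
    exact hzΔ (Or.inr ⟨h2 hzv, hzB⟩)
  exact not_isMeagre_diff (not_isMeagre_Cl v L₀) hΔ (hme'.mono hsub)

/-- `ACk` is a maximal antichain. -/
lemma ACk_maxAC {m : ℕ → ℕ} {x : Cantor} (hm : StrictMono m) (k : ℕ) :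
    MaxAC (ACk m x k) := by
  refine ⟨ACk_antichain hm k, ?_⟩
  intro b hb
  obtain ⟨B, hB⟩ := cohenCls_surj b
  obtain ⟨U, hUo, hΔ⟩ := exists_open_symmDiff_meagre B
  have hBnm : ¬ IsMeagre (B : Set Cantor) := fun h => hb (hB ▸ (cohenCls_eq_bot_iff B).mpr h)
  obtain ⟨u₀, hu₀⟩ := open_nonempty_of_rep hΔ hBnm
  obtain ⟨N, hN⟩ := exists_Cl_subset hUo hu₀
  obtain ⟨n, w, hg, hagree, hor⟩ := core_ext hm x k u₀ N
  refine ⟨clsCl w (m (n+1)), ⟨n, w, hg, rfl⟩, ?_⟩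
  rcases hor with hor | hor
  · exact meet_ne_bot_of_cyl hB hΔ (Subset.refl _) (subset_trans hor hN)
  · exact meet_ne_bot_of_cyl hB hΔ hor hN

/-- `PAC` is a maximal antichain. -/
lemma PAC_maxAC {m : ℕ → ℕ} {x : Cantor} (hm : StrictMono m) :
    MaxAC (PAC m x) := by
  refine ⟨PAC_antichain hm, ?_⟩
  intro b hb
  obtain ⟨B, hB⟩ := cohenCls_surj b
  obtain ⟨U, hUo, hΔ⟩ := exists_open_symmDiff_meagre B
  have hBnm : ¬ IsMeagre (B : Set Cantor) := fun h => hb (hB ▸ (cohenCls_eq_bot_iff B).mpr h)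
  obtain ⟨u₀, hu₀⟩ := open_nonempty_of_rep hΔ hBnm
  obtain ⟨N, hN⟩ := exists_Cl_subset hUo hu₀
  by_cases hfalse : ∃ i, i < N ∧ u₀ i = false
  · obtain ⟨k₀, hk₀N, hk₀f, hk₀min⟩ :
        ∃ k₀, k₀ < N ∧ u₀ k₀ = false ∧ ∀ i, i < k₀ → u₀ i = true := by
      have hmem := Nat.sInf_mem hfalse
      refine ⟨sInf {i | i < N ∧ u₀ i = false}, hmem.1, hmem.2, ?_⟩
      intro i hi
      cases hbi : u₀ i with
      | false =>
          exact absurd (Nat.sInf_le (show i ∈ {i | i < N ∧ u₀ i = false} from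
            ⟨lt_trans hi hmem.1, hbi⟩)) (not_le.mpr hi)
      | true => rfl
    obtain ⟨n, w, hg, hagree, hor⟩ := core_ext hm x (k₀+1) u₀ N
    have hpg : pg k₀ w := by
      constructor
      · intro i hi
        rw [hagree i (by omega)]
        exact hk₀min i hi
      · rw [hagree k₀ hk₀N]
        exact hk₀f
    refine ⟨clsCl w (m (n+1)), ⟨k₀, n, w, ⟨hpg, hg.1, hg.2.1, hg.2.2⟩, rfl⟩, ?_⟩
    rcases hor with hor | hor
    · exact meet_ne_bot_of_cyl hB hΔ (Subset.refl _) (subset_trans hor hN)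
    · exact meet_ne_bot_of_cyl hB hΔ hor hN
  · push_neg at hfalse
    have halltrue : ∀ i, i < N → u₀ i = true := by
      intro i hi
      cases hbi : u₀ i with
      | false => exact absurd hbi (hfalse i hi)
      | true => rfl
    set u₁ : Cantor := fun i => if i = N then false else u₀ i with hu₁
    have hsub1 : Cl u₁ (N+1) ⊆ Cl u₀ N := by
      refine Cl_subset_Cl (Nat.le_succ N) ?_
      intro i hi
      simp [hu₁, Nat.ne_of_lt hi]
    obtain ⟨n, w, hg, hagree, hor⟩ := core_ext hm x (N+1) u₁ (N+1)
    have hpg : pg N w := by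
      constructor
      · intro i hi
        rw [hagree i (by omega)]
        simp [hu₁, Nat.ne_of_lt hi, halltrue i hi]
      · rw [hagree N (Nat.lt_succ_self N)]
        simp [hu₁]
    refine ⟨clsCl w (m (n+1)), ⟨N, n, w, ⟨hpg, hg.1, hg.2.1, hg.2.2⟩, rfl⟩, ?_⟩
    rcases hor with hor | hor
    · exact meet_ne_bot_of_cyl hB hΔ (Subset.refl _)
        (subset_trans hor (subset_trans hsub1 hN))
    · exact meet_ne_bot_of_cyl hB hΔ hor (subset_trans hsub1 hN)

end
end S14
namespace S14
open Topology Filter Set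

noncomputable section

/-- Override the head of `z` by the page-`k` head. -/
def ρ (k : ℕ) (z : Cantor) : Cantor :=
  fun i => if i < k then true else if i = k then false else z i

lemma ρ_continuous (k : ℕ) : Continuous (ρ k) := by
  apply continuous_pi
  intro i
  by_cases h1 : i < k
  · simpa [ρ, h1] using continuous_const
  · by_cases h2 : i = k
    · simpa [ρ, h1, h2] using continuous_const
    · simpa [ρ, h1, h2] using continuous_apply i

lemma ρ_apply_large (k : ℕ) (z : Cantor) {i : ℕ} (h : k < i) : ρ k z i = z i := by
  have h1 : ¬ i < k := by omega
  have h2 : ¬ i = k := by omega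
  simp [ρ, h1, h2]

lemma dense_preimage_ρ (k : ℕ) {t : Set Cantor} (ht : IsOpen t) (htd : Dense t) :
    Dense (ρ k ⁻¹' t) := by
  rw [dense_iff_inter_open]
  rintro V hV ⟨z₀, hz₀⟩
  obtain ⟨L, hL⟩ := exists_Cl_subset hV hz₀
  set L₁ := max L (k+1) with hL₁
  obtain ⟨w, hw1, hw2⟩ := htd.inter_open_nonempty (Cl (ρ k z₀) L₁) (isOpen_Cl _ _)
    ⟨ρ k z₀, self_mem_Cl _ _⟩
  set zf : Cantor := fun i => if i ≤ k then z₀ i else w i with hzf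
  have hρzf : ρ k zf = w := by
    funext i
    by_cases h1 : i < k
    · rw [show ρ k zf i = true from by simp [ρ, h1]]
      exact (hw1 k |> fun _ => (hw1 i (by omega)).trans (by simp [ρ, h1])).symm
    · by_cases h2 : i = k
      · rw [show ρ k zf i = false from by simp [ρ, h1, h2]]
        exact ((hw1 i (by omega)).trans (by simp [ρ, h1, h2])).symm
      · rw [ρ_apply_large k zf (by omega)]
        have h3 : ¬ i ≤ k := by omega
        simp [hzf, h3]
  have hzfCl : zf ∈ Cl z₀ L := by
    intro i hi
    by_cases h1 : i ≤ k
    · simp [hzf, h1]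
    · have : zf i = w i := by simp [hzf, h1]
      rw [this, hw1 i (by omega), ρ_apply_large k z₀ (by omega)]
  have hzft : zf ∈ ρ k ⁻¹' t := by
    show ρ k zf ∈ t
    rw [hρzf]
    exact hw2
  exact ⟨zf, hL hzfCl, hzft⟩

lemma isMeagre_preimage_ρ (k : ℕ) {S : Set Cantor} (h : IsMeagre S) :
    IsMeagre (ρ k ⁻¹' S) := by
  rw [IsMeagre] at h ⊢
  rw [show (ρ k ⁻¹' S)ᶜ = ρ k ⁻¹' Sᶜ from rfl]
  rw [mem_residual_iff] at h ⊢
  obtain ⟨T, hTo, hTd, hTc, hTsub⟩ := h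
  refine ⟨(fun t => ρ k ⁻¹' t) '' T, ?_, ?_, hTc.image _, ?_⟩
  · rintro t ⟨t₀, ht₀, rfl⟩
    exact (hTo t₀ ht₀).preimage (ρ_continuous k)
  · rintro t ⟨t₀, ht₀, rfl⟩
    exact dense_preimage_ρ k (hTo t₀ ht₀) (hTd t₀ ht₀)
  · intro z hz
    refine hTsub ?_
    intro t ht
    exact hz (ρ k ⁻¹' t) (mem_image_of_mem _ ht)

/-- For every maximal antichain `C` there is a canonical meagre set `Φ(C)` catching the
meagre set of every chopped real whose paged antichain is almost-refined by `C`. -/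
lemma exists_Phi (C : Set CohenAlg) (hC : MaxAC C) :
    ∃ S : Set Cantor, IsMeagre S ∧ ∀ (mI : ℕ → ℕ) (x : Cantor), StrictMono mI →
      AlmostRefines (PAC mI x) C → Mset mI x ⊆ S := by
  classical
  obtain ⟨e, B, U, hrange, hBe, hUo, hΔ, hDm⟩ := maxAC_data hC
  set S : Set Cantor :=
    ⋃ k, ρ k ⁻¹' ((⋃ i, U i)ᶜ ∪ ⋃ i, symmDiff ((B i : Set Cantor)) (U i)) with hS
  refine ⟨S, ?_, ?_⟩
  · exact isMeagre_iUnion fun k =>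
      isMeagre_preimage_ρ k (hDm.union' (isMeagre_iUnion fun i => hΔ i))
  · rintro mI x hm ⟨F, hFsub, hRef⟩ z hz
    obtain ⟨K, hK⟩ := mem_iUnion.mp hz
    refine mem_iUnion.mpr ⟨K, ?_⟩
    set z' := ρ K z with hz'
    show z' ∈ (⋃ i, U i)ᶜ ∪ ⋃ i, symmDiff ((B i : Set Cantor)) (U i)
    by_contra hcon
    have hzD : z' ∈ ⋃ i, U i := by
      by_contra h
      exact hcon (Or.inl h)
    have hzΔ : z' ∉ ⋃ i, symmDiff ((B i : Set Cantor)) (U i) := fun h => hcon (Or.inr h)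
    obtain ⟨i, hzU⟩ := mem_iUnion.mp hzD
    have hzB : z' ∈ (B i : Set Cantor) := by
      by_contra h
      exact hzΔ (mem_iUnion.mpr ⟨i, Or.inr ⟨hzU, h⟩⟩)
    have heiC : e i ∈ C := hrange ▸ mem_range_self i
    obtain ⟨a, ha, hlea⟩ := hRef (e i) heiC
    have hgen : ∃ (k' n : ℕ) (w : Cantor), gen2 mI x k' n w ∧ z' ∈ Cl w (mI (n+1)) := by
      rcases ha with ⟨haPAC, -⟩ | hasup
      · obtain ⟨k', n, w, hg, rfl⟩ := haPAC
        have hsub : U i ⊆ Cl w (mI (n+1)) :=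
          open_subset_of_le (hUo i) (hΔ i) (isClosed_Cl w _) (measurableSet_Cl w _)
            (by rw [hBe i]; exact hlea)
        exact ⟨k', n, w, hg, hsub hzU⟩
      · rw [mem_singleton_iff] at hasup
        subst hasup
        have hFrep : ∀ a ∈ F, ∃ (T : Set Cantor) (hmm : MeasurableSet T), IsClosed T ∧
            a = cohenCls ⟨T, hmm⟩ ∧ ∀ z ∈ T,
              (∃ (k' n : ℕ) (w : Cantor), gen2 mI x k' n w ∧ z ∈ Cl w (mI (n+1))) := by
          intro a haF
          obtain ⟨k', n, w, hg, rfl⟩ := hFsub haF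
          exact ⟨Cl w (mI (n+1)), measurableSet_Cl w _, isClosed_Cl w _, rfl,
            fun z hz => ⟨k', n, w, hg, hz⟩⟩
        obtain ⟨T, hmT, hTc, hTsup, hTP⟩ := sup_rep F hFrep
        have hsub : U i ⊆ T :=
          open_subset_of_le (hUo i) (hΔ i) hTc hmT (by rw [hBe i, ← hTsup]; exact hlea)
        exact hTP _ (hsub hzU)
    obtain ⟨k', n, w, hg, hzCl⟩ := hgen
    have hk'lt : k' < mI (n+1) := by
      have h1 : k' < n := hg.2.1
      have h2 : n ≤ mI n := hm.le_apply
      have h3 : mI n < mI (n+1) := hm (Nat.lt_succ_self n)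
      omega
    have hkK : k' = K := by
      rcases lt_trichotomy k' K with h | h | h
      · exfalso
        have e1 : z' k' = w k' := hzCl k' hk'lt
        have e2 : z' k' = true := by simp [hz', ρ, h]
        rw [hg.1.2] at e1
        rw [e2] at e1
        simp at e1
      · exact h
      · exfalso
        have e1 : z' K = w K := hzCl K (lt_trans h hk'lt)
        have e2 : z' K = false := by simp [hz', ρ]
        rw [hg.1.1 K h] at e1
        rw [e2] at e1
        exact Bool.false_ne_true e1
    have hmatch' : matchAt mI x z' n :=
      matchAt_of_agree (fun i hi => hzCl i hi) hg.2.2.1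
    have hmatch : matchAt mI x z n := by
      intro i h1 h2
      have hKi : K < i := by
        have : K + 1 ≤ n := hkK ▸ hg.2.1
        have h3 : n ≤ mI n := hm.le_apply
        omega
      rw [← ρ_apply_large K z hKi]
      exact hmatch' i h1 h2
    have hKn : K ≤ n := by
      have h1 : k' + 1 ≤ n := hg.2.1
      omega
    exact hK n hKn hmatch

end
end S14
namespace S14
open Topology Filter Set

noncomputable section

lemma almostRefines_refl (A : Set CohenAlg) : AlmostRefines A A := by
  classical
  refine ⟨∅, by simp, ?_⟩
  intro c hc
  refine ⟨c, ?_, le_rfl⟩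
  left
  exact ⟨hc, by simp⟩

/-- For every maximal antichain `A` there is a chopped real `(mJ, y)` such that whenever
`Mset mJ y ⊆ Mset mI x`, some tail block antichain of `(mI, x)` almost-refines `A`. -/
lemma exists_query (A : Set CohenAlg) (hA : MaxAC A) :
    ∃ (mJ : ℕ → ℕ) (y : Cantor), StrictMono mJ ∧ ∀ (mI : ℕ → ℕ) (x : Cantor), StrictMono mI →
      Mset mJ y ⊆ Mset mI x → ∃ N, AlmostRefines A (ACk mI x N) := by
  classical
  obtain ⟨e, B, U, hrange, hBe, hUo, hΔ, hDm⟩ := maxAC_data hA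
  obtain ⟨mJ, y, hJ, hcap⟩ := capture_pair hUo hDm
  refine ⟨mJ, y, hJ, ?_⟩
  intro mI x hI hsub
  obtain ⟨N, hN⟩ := engulf_of_subset hI hJ hsub
  refine ⟨N, ∅, by simp, ?_⟩
  rintro c ⟨n, w, hg, rfl⟩
  obtain ⟨mm, hmm1, hmm2, hagree⟩ := hN n hg.1
  obtain ⟨j, hj⟩ := hcap mm w
  have hsubcl : Cl w (mI (n+1)) ⊆ Cl (ovw w (mJ mm) y) (mJ (mm+1)) := by
    intro z hz i hi
    have hiI : i < mI (n+1) := lt_of_lt_of_le hi hmm2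
    by_cases hiJ : i < mJ mm
    · rw [hz i hiI]
      simp [ovw, hiJ]
    · push_neg at hiJ
      have e1 : x i = y i := hagree i hiJ hi
      have e2 : w i = x i := hg.2.1 i (le_trans hmm1 hiJ) hiI
      rw [hz i hiI, e2, e1]
      simp [ovw, not_lt.mpr hiJ]
  have hle : clsCl w (mI (n+1)) ≤ e j := by
    rw [← hBe j]
    have h1 : clsCl w (mI (n+1)) ≤ cohenCls ⟨U j, (hUo j).measurableSet⟩ :=
      cohenCls_mono (subset_trans hsubcl hj)
    have h2 : cohenCls (⟨U j, (hUo j).measurableSet⟩ : BorelSets) = cohenCls (B j) := by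
      apply cohenCls_congr
      show IsMeagre (symmDiff (U j) ((B j : Set Cantor)))
      rw [symmDiff_comm]
      exact hΔ j
    exact le_trans h1 (le_of_eq h2)
  refine ⟨e j, ?_, hle⟩
  left
  exact ⟨hrange ▸ mem_range_self j, by simp⟩

lemma isMeagre_iUnion' {ι : Sort*} [Countable ι] {s : ι → Set Cantor}
    (hs : ∀ i, IsMeagre (s i)) : IsMeagre (⋃ i, s i) := by
  rw [IsMeagre, compl_iUnion]
  exact (countable_iInter_mem).mpr fun i => hs i

lemma isMeagre_sUnion_of_finite {F : Set (Set Cantor)} (hfin : F.Finite)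
    (hm : ∀ s ∈ F, IsMeagre s) : IsMeagre (⋃₀ F) := by
  rw [sUnion_eq_iUnion]
  have : Countable ↥F := hfin.countable
  exact isMeagre_iUnion' fun s => hm s.1 s.2

lemma cofinal_infinite {F : Set (Set Cantor)} (hFm : ∀ s ∈ F, IsMeagre s)
    (hFcof : ∀ s : Set Cantor, IsMeagre s → ∃ t ∈ F, s ⊆ t) : F.Infinite := by
  by_contra hinf
  have hfin : F.Finite := Set.not_infinite.mp hinf
  have hUm : IsMeagre (⋃₀ F) := isMeagre_sUnion_of_finite hfin hFm
  have hne : ⋃₀ F ≠ univ := by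
    intro h
    exact not_isMeagre_univ (h ▸ hUm)
  obtain ⟨z, hz⟩ := (Set.ne_univ_iff_exists_notMem _).mp hne
  obtain ⟨t, htF, hsub⟩ := hFcof (⋃₀ F ∪ {z}) (hUm.union' (isMeagre_singleton z))
  exact hz ⟨t, htF, hsub (mem_union_right _ rfl)⟩

end
end S14
namespace S14
open Topology Filter Set

noncomputable section

lemma aleph0_le_mk_of_infinite {F : Set (Set Cantor)} (h : F.Infinite) :
    Cardinal.aleph0 ≤ Cardinal.mk ↥F := by
  rw [Cardinal.aleph0_le_mk_iff]
  exact h.to_subtype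

theorem dNum_le_cofM : dNum (PartStar CohenAlg) ≤ cofM := by
  classical
  unfold cofM
  apply le_csInf
  · exact ⟨_, {s | IsMeagre s}, fun s hs => hs, fun s hs => ⟨s, hs, subset_rfl⟩, rfl⟩
  rintro c ⟨F, hFm, hFcof, rfl⟩
  choose mf xf hsm hsub using fun M : ↥F => chopped (hFm M.1 M.2)
  set Yf : ↥F × ℕ → (PartStar CohenAlg).Cod :=
    fun p => (⟨ACk (mf p.1) (xf p.1) p.2, ACk_maxAC (hsm p.1) p.2⟩ : PartT CohenAlg) with hYf
  have hdom : ∀ A : (PartStar CohenAlg).Dom, ∃ y ∈ range Yf, (PartStar CohenAlg).Rel A y := by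
    intro A
    obtain ⟨mJ, y, hJ, hresp⟩ := exists_query A.1 A.2
    obtain ⟨M, hMF, hMsub⟩ := hFcof (Mset mJ y) (isMeagre_Mset hJ y)
    obtain ⟨N, hAR⟩ := hresp (mf ⟨M, hMF⟩) (xf ⟨M, hMF⟩) (hsm ⟨M, hMF⟩)
      (subset_trans hMsub (hsub ⟨M, hMF⟩))
    exact ⟨Yf (⟨M, hMF⟩, N), mem_range_self _, hAR⟩
  have hmem : Cardinal.mk ↥(range Yf) ∈
      {c | ∃ Y : Set (PartStar CohenAlg).Cod, Cardinal.mk ↥Y = c ∧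
        ∀ x : (PartStar CohenAlg).Dom, ∃ y ∈ Y, (PartStar CohenAlg).Rel x y} :=
    ⟨range Yf, rfl, hdom⟩
  refine le_trans (csInf_le (OrderBot.bddBelow _) hmem) ?_
  refine le_trans Cardinal.mk_range_le ?_
  have h1 : Cardinal.mk (↥F × ℕ) = Cardinal.mk ↥F * Cardinal.aleph0 := by
    rw [Cardinal.mk_prod]
    simp
  rw [h1]
  rw [Cardinal.mul_eq_left (aleph0_le_mk_of_infinite (cofinal_infinite hFm hFcof))
    (aleph0_le_mk_of_infinite (cofinal_infinite hFm hFcof)) Cardinal.aleph0_ne_zero]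

theorem cofM_le_dNum : cofM ≤ dNum (PartStar CohenAlg) := by
  classical
  unfold dNum
  apply le_csInf
  · refine ⟨_, univ, rfl, fun A => ⟨A, mem_univ _, ?_⟩⟩
    exact almostRefines_refl A.1
  rintro c ⟨Y, rfl, hdom⟩
  choose Φf hΦm hΦc using fun C : ↥Y => exists_Phi C.1.1 C.1.2
  have hmem : Cardinal.mk ↥(range Φf) ∈
      {c | ∃ F : Set (Set Cantor), (∀ s ∈ F, IsMeagre s) ∧
        (∀ s : Set Cantor, IsMeagre s → ∃ t ∈ F, s ⊆ t) ∧ Cardinal.mk ↥F = c} := by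
    refine ⟨range Φf, ?_, ?_, rfl⟩
    · rintro s ⟨C, rfl⟩
      exact hΦm C
    · intro s hs
      obtain ⟨mI, x, hsm', hsub'⟩ := chopped hs
      obtain ⟨Cel, hCY, hrel⟩ := hdom ⟨PAC mI x, PAC_maxAC hsm'⟩
      exact ⟨Φf ⟨Cel, hCY⟩, mem_range_self _,
        subset_trans hsub' (hΦc ⟨Cel, hCY⟩ mI x hsm' hrel)⟩
  exact le_trans (csInf_le (OrderBot.bddBelow _) hmem) Cardinal.mk_range_le

theorem bNum_le_addM : bNum (sigmaSys (PartStar CohenAlg)) ≤ addM := by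
  classical
  unfold addM
  apply le_csInf
  · refine ⟨_, range (fun z : Cantor => ({z} : Set Cantor)), ?_, ?_, rfl⟩
    · rintro s ⟨z, rfl⟩
      exact isMeagre_singleton z
    · have huniv : ⋃₀ range (fun z : Cantor => ({z} : Set Cantor)) = univ := by
        ext z
        simp only [mem_sUnion, mem_range, mem_univ, iff_true]
        exact ⟨{z}, ⟨z, rfl⟩, rfl⟩
      rw [huniv]
      exact not_isMeagre_univ
  rintro c ⟨F, hFm, hFnm, rfl⟩
  choose mf xf hsm hsub using fun M : ↥F => chopped (hFm M.1 M.2)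
  set Xf : ↥F → (sigmaSys (PartStar CohenAlg)).Dom :=
    fun M => (⟨PAC (mf M) (xf M), PAC_maxAC (hsm M)⟩ : PartT CohenAlg) with hXf
  have hunb : ∀ f : (sigmaSys (PartStar CohenAlg)).Cod,
      ∃ a ∈ range Xf, ¬ (sigmaSys (PartStar CohenAlg)).Rel a f := by
    intro f
    by_contra hcon
    push_neg at hcon
    have hcon' : ∀ a ∈ range Xf, ∃ n, AlmostRefines a.1 ((f n).1) := hcon
    choose Φg hΦm hΦc using fun n => exists_Phi (f n).1 (f n).2
    apply hFnm
    refine (isMeagre_iUnion fun n => hΦm n).mono ?_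
    rintro z ⟨M, hMF, hzM⟩
    obtain ⟨n, hAR⟩ := hcon' (Xf ⟨M, hMF⟩) (mem_range_self _)
    exact mem_iUnion.mpr ⟨n, hΦc n (mf ⟨M, hMF⟩) (xf ⟨M, hMF⟩) (hsm ⟨M, hMF⟩) hAR
      (hsub ⟨M, hMF⟩ hzM)⟩
  have hmem : Cardinal.mk ↥(range Xf) ∈
      {c | ∃ X : Set (sigmaSys (PartStar CohenAlg)).Dom, Cardinal.mk ↥X = c ∧
        ∀ y : (sigmaSys (PartStar CohenAlg)).Cod, ∃ x ∈ X,
          ¬ (sigmaSys (PartStar CohenAlg)).Rel x y} :=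
    ⟨range Xf, rfl, hunb⟩
  exact le_trans (csInf_le (OrderBot.bddBelow _) hmem) Cardinal.mk_range_le

theorem addM_le_bNum : addM ≤ bNum (sigmaSys (PartStar CohenAlg)) := by
  classical
  unfold bNum
  apply le_csInf
  · refine ⟨_, univ, rfl, ?_⟩
    intro f
    choose Φg hΦm hΦc using fun n => exists_Phi (f n).1 (f n).2
    have hZ : IsMeagre (⋃ n, Φg n) := isMeagre_iUnion fun n => hΦm n
    have hZne : (⋃ n, Φg n) ≠ univ := fun h => not_isMeagre_univ (h ▸ hZ)
    obtain ⟨z, hz⟩ := (Set.ne_univ_iff_exists_notMem _).mp hZne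
    set x : Cantor := fun i => !(z i) with hx
    refine ⟨⟨PAC id x, PAC_maxAC strictMono_id⟩, mem_univ _, ?_⟩
    rintro ⟨n, hAR⟩
    have hzM : z ∈ Mset id x := by
      refine mem_iUnion.mpr ⟨0, ?_⟩
      intro n' _ hmat
      have := hmat n' (le_refl _) (Nat.lt_succ_self n')
      simp [hx] at this
    exact hz (mem_iUnion.mpr ⟨n, hΦc n id x strictMono_id hAR hzM⟩)
  rintro c ⟨X, rfl, hunb⟩
  choose mJf yf hJ hresp using fun A : ↥X => exists_query A.1.1 A.1.2
  have hmem : Cardinal.mk ↥(range (fun A : ↥X => Mset (mJf A) (yf A))) ∈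
      {c | ∃ F : Set (Set Cantor), (∀ s ∈ F, IsMeagre s) ∧
        ¬ IsMeagre (⋃₀ F) ∧ Cardinal.mk ↥F = c} := by
    refine ⟨_, ?_, ?_, rfl⟩
    · rintro s ⟨A, rfl⟩
      exact isMeagre_Mset (hJ A) (yf A)
    · intro hZm
      obtain ⟨mI, x, hsm', hsubZ⟩ := chopped hZm
      obtain ⟨A, hAX, hnot⟩ := hunb (fun k => (⟨ACk mI x k, ACk_maxAC hsm' k⟩ : PartT CohenAlg))
      apply hnot
      obtain ⟨N, hAR⟩ := hresp ⟨A, hAX⟩ mI x hsm'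
        (subset_trans (subset_sUnion_of_mem (mem_range_self (⟨A, hAX⟩ : ↥X))) hsubZ)
      exact ⟨N, hAR⟩
  exact le_trans (csInf_le (OrderBot.bddBelow _) hmem) Cardinal.mk_range_le

end
end S14

/-- `𝔡(Part*(ℂ_ω)) = cof(ℳ)` and `𝔟((Part*(ℂ_ω))^σ) = add(ℳ)`. -/
theorem stmt14 :
    dNum (PartStar CohenAlg) = cofM ∧ bNum (sigmaSys (PartStar CohenAlg)) = addM := by
  exact ⟨le_antisymm S14.dNum_le_cofM S14.cofM_le_dNum,
    le_antisymm S14.bNum_le_addM S14.addM_le_bNum⟩
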